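/- arXiv:1408.2935 — 4 statements merged into one kernel-verified Lean document; each statement's English description precedes it below -/
import Mathlib

section
/- Let X be a connected simple graph on n > 2 vertices with Laplacian L having spectral decomposition L = Σ_r λ_r F_r (F_r orthogonal projections onto distinct eigenspaces, λ_0 = 0 < λ_1 < ... < λ_d). Suppose for distinct vertices u, v and every r, F_r e_u = ± F_r e_v. If F_r e_u = F_r e_v holds for exactly one index r, then this index is r = 0 and e_u = e_v, a contradiction; hence at least two distinct eigenvalues λ_r satisfy F_r e_u = F_r e_v. -/
open Finset Matrix

private lemma sum_mulVec_aux {V ι : Type*} [Fintype V] [Fintype ι]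
    (A : ι → Matrix V V ℝ) (x : V → ℝ) :
    (∑ r, A r) *ᵥ x = ∑ r, A r *ᵥ x := by
  ext i
  simp only [Matrix.mulVec, dotProduct, Matrix.sum_apply, Finset.sum_mul,
    Finset.sum_apply]
  rw [Finset.sum_comm]

/-- Let `X` be a connected graph on `n > 2` vertices with Laplacian
spectral decomposition `L = Σ_r λ_r F_r` (orthogonal projections onto eigenspaces for
distinct eigenvalues `0 = λ₀ < λ₁ < ... < λ_d`). If for distinct vertices `u, v` every
projection satisfies `F_r e_u = ± F_r e_v`, then at least two distinct eigenvalues `λ_r`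
satisfy `F_r e_u = F_r e_v ≠ 0`. -/
theorem two_plus_eigenvalues_of_strong_cospectrality
    {V : Type*} [Fintype V] [DecidableEq V]
    (G : SimpleGraph V) [DecidableRel G.Adj] (hconn : G.Connected)
    (hn : 2 < Fintype.card V)
    (d : ℕ) (lam : Fin (d + 1) → ℝ) (hmono : StrictMono lam) (h0 : lam 0 = 0)
    (F : Fin (d + 1) → Matrix V V ℝ)
    (hsymm : ∀ r, (F r).IsSymm)
    (hproj : ∀ r, F r * F r = F r)
    (horth : ∀ r s, r ≠ s → F r * F s = 0)
    (hsum : ∑ r, F r = 1)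
    (hdecomp : G.lapMatrix ℝ = ∑ r, lam r • F r)
    (u v : V) (huv : u ≠ v)
    (hcospec : ∀ r, F r *ᵥ Pi.single u 1 = F r *ᵥ Pi.single v 1 ∨
                    F r *ᵥ Pi.single u 1 = -(F r *ᵥ Pi.single v 1)) :
    2 ≤ {r : Fin (d + 1) |
          F r *ᵥ Pi.single u 1 = F r *ᵥ Pi.single v 1 ∧
          F r *ᵥ Pi.single u (1 : ℝ) ≠ 0}.ncard := by
  classical
  set eu : V → ℝ := Pi.single u 1 with heu
  set ev : V → ℝ := Pi.single v 1 with hev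
  set T : Finset (Fin (d + 1)) :=
    Finset.univ.filter (fun r => F r *ᵥ eu = F r *ᵥ ev ∧ F r *ᵥ eu ≠ 0) with hT
  have hncard : {r : Fin (d + 1) |
          F r *ᵥ Pi.single u 1 = F r *ᵥ Pi.single v 1 ∧
          F r *ᵥ Pi.single u (1 : ℝ) ≠ 0}.ncard = T.card := by
    rw [← Set.ncard_coe_finset]
    congr 1
    ext r
    simp [hT, heu, hev]
  rw [hncard]
  by_contra hlt
  push_neg at hlt
  -- the key identity: eu + ev = ∑ r in T, 2 • (F r *ᵥ eu)
  have hkey : eu + ev = ∑ r ∈ T, (2 : ℝ) • (F r *ᵥ eu) := by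
    have h1 : eu + ev = ∑ r, (F r *ᵥ eu + F r *ᵥ ev) := by
      rw [Finset.sum_add_distrib, ← sum_mulVec_aux, ← sum_mulVec_aux, hsum,
        Matrix.one_mulVec, Matrix.one_mulVec]
    rw [h1, ← Finset.sum_subset (Finset.subset_univ T)]
    · apply Finset.sum_congr rfl
      intro r hr
      rw [hT, Finset.mem_filter] at hr
      rw [← hr.2.1, two_smul]
    · intro r _ hr
      rw [hT, Finset.mem_filter] at hr
      push_neg at hr
      rcases hcospec r with h | h
      · have h0' : F r *ᵥ eu = 0 := by
          by_contra hne
          exact hne (hr (Finset.mem_univ r) h)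
        simp [← h, h0']
      · rw [h]; abel
  -- T is nonempty
  have hTne : T.Nonempty := by
    rcases Finset.eq_empty_or_nonempty T with h | h
    · exfalso
      rw [h, Finset.sum_empty] at hkey
      have := congrFun hkey u
      simp only [Pi.add_apply, Pi.zero_apply, heu, hev] at this
      rw [Pi.single_eq_same, Pi.single_eq_of_ne huv] at this
      norm_num at this
    · exact h
  -- hence T.card = 1
  have hcard1 : T.card = 1 := by
    have := Finset.card_pos.mpr hTne
    omega
  obtain ⟨r, hr⟩ := Finset.card_eq_one.mp hcard1
  have hrmem : r ∈ T := by rw [hr]; exact Finset.mem_singleton_self r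
  rw [hT, Finset.mem_filter] at hrmem
  rw [hr, Finset.sum_singleton] at hkey
  -- eu + ev = 2 • (F r *ᵥ eu) is an eigenvector of L with eigenvalue lam r
  have hLFr : G.lapMatrix ℝ *ᵥ (F r *ᵥ eu) = lam r • (F r *ᵥ eu) := by
    rw [hdecomp, sum_mulVec_aux]
    have : ∀ s, (lam s • F s) *ᵥ (F r *ᵥ eu) = if s = r then lam r • (F r *ᵥ eu) else 0 := by
      intro s
      rw [Matrix.smul_mulVec, Matrix.mulVec_mulVec]
      by_cases h : s = r
      · subst h; rw [hproj, if_pos rfl]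
      · rw [horth s r h, if_neg h, Matrix.zero_mulVec, smul_zero]
    simp only [this]
    rw [Finset.sum_ite_eq' Finset.univ r (fun _ => lam r • (F r *ᵥ eu)),
      if_pos (Finset.mem_univ r)]
  have hL : G.lapMatrix ℝ *ᵥ (eu + ev) = lam r • (eu + ev) := by
    rw [hkey, Matrix.mulVec_smul, hLFr, smul_comm]
  -- sum of entries of L *ᵥ x is zero (column sums vanish), so lam r * 2 = 0
  have hcolsum : ∀ z : V, ∑ w, G.lapMatrix ℝ w z = 0 := by
    intro z
    have hsym := G.isSymm_lapMatrix (R := ℝ)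
    have h1 : ∀ w, G.lapMatrix ℝ w z = G.lapMatrix ℝ z w := by
      intro w
      conv_lhs => rw [← hsym]
      rfl
    simp only [h1]
    have := congrFun (G.lapMatrix_mulVec_const_eq_zero (R := ℝ)) z
    simpa [Matrix.mulVec, dotProduct] using this
  have hsumentries : ∑ w, (G.lapMatrix ℝ *ᵥ (eu + ev)) w = 0 := by
    simp only [Matrix.mulVec, dotProduct]
    rw [Finset.sum_comm]
    simp only [← Finset.sum_mul]
    simp [hcolsum]
  have hsum2 : ∑ w, (eu + ev) w = 2 := by
    simp only [Pi.add_apply, Finset.sum_add_distrib, heu, hev]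
    rw [Finset.sum_pi_single', Finset.sum_pi_single']
    norm_num
  rw [hL] at hsumentries
  simp only [Pi.smul_apply, smul_eq_mul, ← Finset.mul_sum] at hsumentries
  rw [hsum2] at hsumentries
  have hlam0 : lam r = 0 := by linarith
  -- hence L *ᵥ (eu + ev) = 0, so eu + ev is constant on the connected graph
  rw [hlam0, zero_smul] at hL
  have hreach : ∀ i j : V, G.Reachable i j → (eu + ev) i = (eu + ev) j := by
    rw [← G.lapMatrix_mulVec_eq_zero_iff_forall_reachable]
    exact hL
  -- pick a third vertex w
  have hw : ∃ w : V, w ≠ u ∧ w ≠ v := by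
    have hcompl : (({u, v} : Finset V)ᶜ).Nonempty := by
      rw [← Finset.card_pos, Finset.card_compl]
      have h2 : ({u, v} : Finset V).card ≤ 2 :=
        Finset.card_insert_le _ _ |>.trans (by simp)
      omega
    obtain ⟨w, hwmem⟩ := hcompl
    simp only [Finset.mem_compl, Finset.mem_insert, Finset.mem_singleton, not_or] at hwmem
    exact ⟨w, hwmem.1, hwmem.2⟩
  obtain ⟨w, hwu, hwv⟩ := hw
  have := hreach u w (hconn u w)
  simp only [Pi.add_apply, heu, hev] at this
  rw [Pi.single_eq_same, Pi.single_eq_of_ne huv, Pi.single_eq_of_ne hwu,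
    Pi.single_eq_of_ne hwv] at this
  norm_num at this
end

section
/- Let X be a graph with Laplacian L = Σ_r λ_r F_r (spectral decomposition into projections onto distinct eigenspaces). Let u, v be distinct vertices with F_r e_u = ± F_r e_v for all r. If there is exactly one eigenvalue λ such that F e_u = −F e_v ≠ 0 for the corresponding projection F, then e_u − e_v is an eigenvector of L for λ, and consequently u and v are twin vertices (N(u)\{v} = N(v)\{u}). -/
open Finset Matrix

lemma sum_mulVec' {V ι : Type*} [Fintype V] [Fintype ι] (A : ι → Matrix V V ℝ) (x : V → ℝ) :
    (∑ i, A i) *ᵥ x = ∑ i, A i *ᵥ x := by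
  ext j
  simp only [mulVec, dotProduct, Finset.sum_apply, Matrix.sum_apply, Finset.sum_mul]
  rw [Finset.sum_comm]

/-- Let `L = Σ_r λ_r F_r` be the spectral decomposition of the
Laplacian of a graph `X`, and let `u ≠ v` be vertices with `F_r e_u = ± F_r e_v` for
all `r`. If exactly one index `r₀` satisfies `F_{r₀} e_u = -F_{r₀} e_v ≠ 0`, then
`e_u - e_v` is an eigenvector of `L` for `λ_{r₀}`, and `u` and `v` are twins. -/
theorem twins_of_unique_minus_eigenvalue
    {V : Type*} [Fintype V] [DecidableEq V]
    (G : SimpleGraph V) [DecidableRel G.Adj]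
    (d : ℕ) (lam : Fin (d + 1) → ℝ) (hinj : Function.Injective lam)
    (F : Fin (d + 1) → Matrix V V ℝ)
    (hsymm : ∀ r, (F r).IsSymm)
    (hproj : ∀ r, F r * F r = F r)
    (horth : ∀ r s, r ≠ s → F r * F s = 0)
    (hsum : ∑ r, F r = 1)
    (hdecomp : G.lapMatrix ℝ = ∑ r, lam r • F r)
    (u v : V) (huv : u ≠ v)
    (hcospec : ∀ r, F r *ᵥ Pi.single u 1 = F r *ᵥ Pi.single v 1 ∨
                    F r *ᵥ Pi.single u 1 = -(F r *ᵥ Pi.single v 1))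
    (r₀ : Fin (d + 1))
    (hr₀ : F r₀ *ᵥ Pi.single u 1 = -(F r₀ *ᵥ Pi.single v 1))
    (hr₀ne : F r₀ *ᵥ Pi.single u (1 : ℝ) ≠ 0)
    (huniq : ∀ r, r ≠ r₀ →
        ¬(F r *ᵥ Pi.single u 1 = -(F r *ᵥ Pi.single v 1) ∧
          F r *ᵥ Pi.single u (1 : ℝ) ≠ 0)) :
    G.lapMatrix ℝ *ᵥ ((Pi.single u 1 - Pi.single v 1 : V → ℝ))
      = lam r₀ • ((Pi.single u 1 - Pi.single v 1 : V → ℝ)) ∧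
    ∀ w : V, w ≠ u → w ≠ v → (G.Adj u w ↔ G.Adj v w) := by
  set x : V → ℝ := Pi.single u 1 - Pi.single v 1 with hx
  -- for r ≠ r₀, F r *ᵥ x = 0
  have hzero : ∀ r, r ≠ r₀ → F r *ᵥ x = 0 := by
    intro r hr
    have h := huniq r hr
    rcases hcospec r with h1 | h1
    · rw [hx, mulVec_sub, h1, sub_self]
    · have hu0 : F r *ᵥ Pi.single u (1 : ℝ) = 0 := by
        by_contra hne
        exact h ⟨h1, hne⟩
      have hv0 : F r *ᵥ Pi.single v (1 : ℝ) = 0 := by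
        have := h1; rw [hu0] at this
        exact (neg_eq_zero.mp this.symm)
      rw [hx, mulVec_sub, hu0, hv0, sub_self]
  -- F r₀ *ᵥ x = x
  have hfix : F r₀ *ᵥ x = x := by
    have h1 : x = (∑ r, F r) *ᵥ x := by rw [hsum, one_mulVec]
    rw [sum_mulVec'] at h1
    rw [Finset.sum_eq_single r₀ (fun r _ hr => hzero r hr) (by simp)] at h1
    exact h1.symm
  have heig : G.lapMatrix ℝ *ᵥ x = lam r₀ • x := by
    rw [hdecomp, sum_mulVec']
    have : ∀ r, (lam r • F r) *ᵥ x = lam r • (F r *ᵥ x) := fun r =>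
      smul_mulVec _ _ _
    simp_rw [this]
    rw [Finset.sum_eq_single r₀ (fun r _ hr => by rw [hzero r hr, smul_zero])
      (by simp), hfix]
  refine ⟨heig, fun w hwu hwv => ?_⟩
  have hw := congrFun heig w
  have hxw : x w = 0 := by
    simp [hx, Pi.single_eq_of_ne hwu, Pi.single_eq_of_ne hwv]
  rw [Pi.smul_apply, hxw, smul_zero] at hw
  rw [hx, mulVec_sub, Pi.sub_apply, mulVec_single_one, mulVec_single_one] at hw
  have hlap : ∀ a b : V, a ≠ b → (G.lapMatrix ℝ)ᵀ a b = if G.Adj b a then (-1 : ℝ) else 0 := by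
    intro a b hab
    simp [SimpleGraph.lapMatrix, Matrix.transpose_apply, SimpleGraph.degMatrix,
      Matrix.diagonal_apply_ne _ hab.symm, SimpleGraph.adjMatrix]
    split <;> simp
  change (G.lapMatrix ℝ)ᵀ u w - (G.lapMatrix ℝ)ᵀ v w = 0 at hw
  rw [hlap u w hwu.symm, hlap v w hwv.symm] at hw
  have : (if G.Adj w u then (-1 : ℝ) else 0) = if G.Adj w v then (-1 : ℝ) else 0 := by
    linarith [hw]
  rw [G.adj_comm u w, G.adj_comm v w]
  by_cases h1 : G.Adj w u <;> by_cases h2 : G.Adj w v <;> simp [h1, h2] at this ⊢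
end

section
/- Let X be a bipartite simple graph with a unique perfect matching. Then the adjacency matrix A of X is invertible and A⁻¹ has integer entries. -/
open Finset Matrix

/-- The subgraph induced by a fixed-point-free involution all of whose pairs are edges. -/
private def matchSub {V : Type*} (G : SimpleGraph V) (f : V → V)
    (hf : Function.Involutive f) (hadj : ∀ v, G.Adj v (f v)) : G.Subgraph where
  verts := Set.univ
  Adj x y := y = f x
  adj_sub := by rintro x y rfl; exact hadj x
  edge_vert := by intro x y _; trivial
  symm := ⟨by rintro x y rfl; exact (hf x).symm⟩

private lemma matchSub_isPM {V : Type*} (G : SimpleGraph V) (f : V → V)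
    (hf : Function.Involutive f) (hadj : ∀ v, G.Adj v (f v)) :
    (matchSub G f hf hadj).IsPerfectMatching := by
  constructor
  · intro v _
    exact ⟨f v, rfl, fun y hy => hy⟩
  · intro v; trivial

/-- If a bipartite graph has a unique perfect matching, then its
adjacency matrix is invertible with an integer inverse, i.e. it is a unit of the
ring of integer matrices. -/
theorem adjMatrix_isUnit_of_unique_perfect_matching
    {V : Type*} [Fintype V] [DecidableEq V]
    (G : SimpleGraph V) [DecidableRel G.Adj]
    (part : V → Bool) (hbip : ∀ ⦃x y : V⦄, G.Adj x y → part x ≠ part y)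
    (hpm : ∃! M : G.Subgraph, M.IsPerfectMatching) :
    IsUnit (G.adjMatrix ℤ) := by
  rw [Matrix.isUnit_iff_isUnit_det]
  obtain ⟨M, hM, huniq⟩ := hpm
  -- the unique partner function coming from M
  have hexu : ∀ v, ∃! w, M.Adj v w := fun v => hM.1 (hM.2 v)
  set m : V → V := fun v => (hexu v).choose with hm
  have hmadj : ∀ v, M.Adj v (m v) := fun v => (hexu v).choose_spec.1
  have hmuniq : ∀ v w, M.Adj v w → w = m v := fun v w h =>
    ((hexu v).choose_spec.2 w h).trans ((hexu v).choose_spec.2 (m v) (hmadj v)).symm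
  have hminv : Function.Involutive m := fun v =>
    (hmuniq (m v) v ((hmadj v).symm)).symm
  have hmG : ∀ v, G.Adj v (m v) := fun v => M.adj_sub (hmadj v)
  set σ₀ : Equiv.Perm V := hminv.toPerm with hσ₀
  have hσ₀app : ∀ v, σ₀ v = m v := fun v => rfl
  -- key uniqueness: any "permutation of edges" equals σ₀
  have key : ∀ σ : Equiv.Perm V, (∀ i, G.Adj (σ i) i) → σ = σ₀ := by
    intro σ hσ
    -- part values flip under σ
    have hpart : ∀ v, part (σ v) ≠ part v := fun v => hbip (hσ v)
    -- two matchings from σ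
    set f : V → V := fun v => if part v then σ⁻¹ v else σ v with hf
    set g : V → V := fun v => if part v then σ v else σ⁻¹ v with hg
    have hpinv : ∀ v, part (σ⁻¹ v) ≠ part v := by
      intro v hc
      exact hpart (σ⁻¹ v) (by rw [show σ (σ⁻¹ v) = v from σ.apply_symm_apply v, hc])
    have hfinv : Function.Involutive f := by
      intro v
      cases h : part v
      · have h2 : part (σ v) = true := by
          cases hp : part (σ v)
          · exact absurd (hp.trans h.symm) (hpart v)
          · rfl
        simp [hf, h, h2]
      · have h2 : part (σ⁻¹ v) = false := by
          cases hp : part (σ⁻¹ v)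
          · rfl
          · exact absurd (hp.trans h.symm) (hpinv v)
        simp [hf, h, show part (σ.symm v) = false from h2]
    have hginv : Function.Involutive g := by
      intro v
      cases h : part v
      · have h2 : part (σ⁻¹ v) = true := by
          cases hp : part (σ⁻¹ v)
          · exact absurd (hp.trans h.symm) (hpinv v)
          · rfl
        simp [hg, h, show part (σ.symm v) = true from h2]
      · have h2 : part (σ v) = false := by
          cases hp : part (σ v)
          · rfl
          · exact absurd (hp.trans h.symm) (hpart v)
        simp [hg, h, h2]
    have hfG : ∀ v, G.Adj v (f v) := by
      intro v
      by_cases h : part v <;> simp only [hf, h, if_true, if_false]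
      · have := hσ (σ⁻¹ v); rwa [show σ (σ⁻¹ v) = v from σ.apply_symm_apply v] at this
      · exact (hσ v).symm
    have hgG : ∀ v, G.Adj v (g v) := by
      intro v
      by_cases h : part v <;> simp only [hg, h, if_true, if_false]
      · exact (hσ v).symm
      · have := hσ (σ⁻¹ v); rwa [show σ (σ⁻¹ v) = v from σ.apply_symm_apply v] at this
    have hMf : matchSub G f hfinv hfG = M := huniq _ (matchSub_isPM G f hfinv hfG)
    have hMg : matchSub G g hginv hgG = M := huniq _ (matchSub_isPM G g hginv hgG)
    have hfm : ∀ v, f v = m v := by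
      intro v
      have h1 : (matchSub G f hfinv hfG).Adj v (f v) := rfl
      rw [hMf] at h1
      exact hmuniq v (f v) h1
    have hgm : ∀ v, g v = m v := by
      intro v
      have h1 : (matchSub G g hginv hgG).Adj v (g v) := rfl
      rw [hMg] at h1
      exact hmuniq v (g v) h1
    ext v
    by_cases h : part v
    · have := hgm v
      simpa only [hg, h, if_true, hσ₀app] using this
    · have := hfm v
      simpa only [hf, h, if_false, Bool.false_eq_true, hσ₀app] using this
  -- σ₀ itself consists of edges
  have hσ₀G : ∀ i, G.Adj (σ₀ i) i := fun i => (hmG i).symm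
  -- compute the determinant
  have hdet : (G.adjMatrix ℤ).det = (Equiv.Perm.sign σ₀ : ℤ) := by
    rw [Matrix.det_apply]
    rw [Finset.sum_eq_single σ₀]
    · have : ∏ i, (G.adjMatrix ℤ) (σ₀ i) i = 1 := by
        apply Finset.prod_eq_one
        intro i _
        simp [SimpleGraph.adjMatrix_apply, hσ₀G i]
      rw [this, Units.smul_def, smul_eq_mul, mul_one]
    · intro σ _ hne
      by_cases hσ : ∀ i, G.Adj (σ i) i
      · exact absurd (key σ hσ) hne
      · push_neg at hσ
        obtain ⟨i, hi⟩ := hσ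
        have : ∏ j, (G.adjMatrix ℤ) (σ j) j = 0 :=
          Finset.prod_eq_zero (Finset.mem_univ i)
            (by simp [SimpleGraph.adjMatrix_apply, hi])
        rw [this, smul_zero]
    · intro h
      exact absurd (Finset.mem_univ σ₀) h
  rw [hdet]
  exact (Equiv.Perm.sign σ₀).isUnit
end

section
/- Let L be the Laplacian of a simple graph X with spectral decomposition L = Σ_r λ_r F_r into projections onto distinct eigenspaces, and let u, v be vertices. If exp(itL) e_u = γ e_v for some real t and γ ∈ ℂ, then for every r, F_r e_u = γ⁻¹ e^{itλ_r} F_r e_v; in particular F_r e_u and F_r e_v are parallel, and ‖F_r e_u‖ = ‖F_r e_v‖ for all r. -/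
open Finset Matrix

lemma mul_exp_of_mul_eq_smul {n : Type*} [Fintype n] [DecidableEq n]
    (B A : Matrix n n ℂ) (c : ℂ) (h : B * A = c • B) :
    B * NormedSpace.exp A = Complex.exp c • B := by
  letI : SeminormedRing (Matrix n n ℂ) := Matrix.linftyOpSemiNormedRing
  letI : NormedRing (Matrix n n ℂ) := Matrix.linftyOpNormedRing
  letI : NormedAlgebra ℂ (Matrix n n ℂ) := Matrix.linftyOpNormedAlgebra
  have hpow : ∀ k : ℕ, B * A ^ k = c ^ k • B := by
    intro k
    induction k with
    | zero => simp
    | succ k ih =>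
        rw [pow_succ, ← mul_assoc, ih, smul_mul_assoc, h, smul_smul, ← pow_succ]
  have hs : Summable (fun k : ℕ => ((k.factorial : ℕ) : ℂ)⁻¹ • A ^ k) :=
    NormedSpace.expSeries_summable' A
  have hsc : Summable (fun k : ℕ => ((k.factorial : ℕ) : ℂ)⁻¹ • c ^ k) :=
    NormedSpace.expSeries_summable' c
  rw [NormedSpace.exp_eq_tsum ℂ, ← Summable.tsum_mul_left B hs]
  have : ∀ k : ℕ, B * (((k.factorial : ℕ) : ℂ)⁻¹ • A ^ k)
      = (((k.factorial : ℕ) : ℂ)⁻¹ • c ^ k) • B := by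
    intro k
    rw [mul_smul_comm, hpow, smul_smul, smul_eq_mul]
  rw [tsum_congr this, Summable.tsum_smul_const hsc]
  rw [Complex.exp_eq_exp_ℂ, NormedSpace.exp_eq_tsum ℂ]

/-- Let `L = Σ_r λ_r F_r` be the spectral decomposition of the
Laplacian of a graph (over `ℂ`, with real distinct eigenvalues `λ_r` and orthogonal
projections `F_r`). If `exp(itL) e_u = γ e_v`, then for every `r` we have
`F_r e_u = γ⁻¹ e^{itλ_r} F_r e_v`; in particular `F_r e_u` and `F_r e_v` are
parallel and have equal (Euclidean) norms. -/
theorem pst_projection_relation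
    {V : Type*} [Fintype V] [DecidableEq V]
    (G : SimpleGraph V) [DecidableRel G.Adj]
    (d : ℕ) (lam : Fin (d + 1) → ℝ) (hinj : Function.Injective lam)
    (F : Fin (d + 1) → Matrix V V ℂ)
    (hherm : ∀ r, (F r).IsHermitian)
    (hproj : ∀ r, F r * F r = F r)
    (horth : ∀ r s, r ≠ s → F r * F s = 0)
    (hsum : ∑ r, F r = 1)
    (hdecomp : G.lapMatrix ℂ = ∑ r, (lam r : ℂ) • F r)
    (u v : V) (t : ℝ) (γ : ℂ)
    (hpst : NormedSpace.exp ((t * Complex.I) • G.lapMatrix ℂ) *ᵥ Pi.single u 1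
        = γ • (Pi.single v 1 : V → ℂ)) :
    ∀ r, F r *ᵥ Pi.single u 1
        = (γ⁻¹ * Complex.exp ((t : ℂ) * lam r * Complex.I)) •
            (F r *ᵥ (Pi.single v 1 : V → ℂ)) ∧
      ∑ w : V, ‖(F r *ᵥ (Pi.single u 1 : V → ℂ)) w‖ ^ 2
        = ∑ w : V, ‖(F r *ᵥ (Pi.single v 1 : V → ℂ)) w‖ ^ 2 := by
  set L : Matrix V V ℂ := G.lapMatrix ℂ with hL
  set A : Matrix V V ℂ := ((t : ℂ) * Complex.I) • L with hA
  set c : Fin (d + 1) → ℂ := fun r => (t : ℂ) * lam r * Complex.I with hc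
  -- distinct complex eigenvalues
  have hlam : ∀ {r s : Fin (d + 1)}, r ≠ s → (lam r : ℂ) ≠ (lam s : ℂ) := by
    intro r s hrs h
    exact hrs (hinj (by exact_mod_cast h))
  -- entries of L are real
  have hLreal : ∀ i j, (starRingEnd ℂ) (L i j) = L i j := by
    intro i j
    simp only [hL, SimpleGraph.lapMatrix, Matrix.sub_apply, SimpleGraph.degMatrix,
      Matrix.diagonal_apply, SimpleGraph.adjMatrix_apply, map_sub, apply_ite (starRingEnd ℂ)]
    simp
  have hLsymm : Lᵀ = L := G.isSymm_lapMatrix ℂ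
  have hLherm : Lᴴ = L := by
    ext i j
    rw [Matrix.conjTranspose_apply]
    rw [show L j i = L i j from congrFun (congrFun hLsymm.symm j) i]
    exact hLreal i j
  -- F r * L = lam r • F r and L * F r = lam r • F r
  have hFL : ∀ r, F r * L = (lam r : ℂ) • F r := by
    intro r
    rw [hdecomp, Finset.mul_sum]
    rw [Finset.sum_eq_single r]
    · rw [mul_smul_comm, hproj]
    · intro s _ hsr
      rw [mul_smul_comm, horth r s (Ne.symm hsr), smul_zero]
    · intro h; exact absurd (Finset.mem_univ r) h
  have hLF : ∀ r, L * F r = (lam r : ℂ) • F r := by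
    intro r
    rw [hdecomp, Finset.sum_mul]
    rw [Finset.sum_eq_single r]
    · rw [smul_mul_assoc, hproj]
    · intro s _ hsr
      rw [smul_mul_assoc, horth s r hsr, smul_zero]
    · intro h; exact absurd (Finset.mem_univ r) h
  -- F r is symmetric
  have hLFt : ∀ r, L * (F r)ᵀ = (lam r : ℝ) • (F r)ᵀ := by
    intro r
    have := congrArg Matrix.transpose (hFL r)
    rw [Matrix.transpose_mul, hLsymm, Matrix.transpose_smul] at this
    exact_mod_cast this
  have horth' : ∀ r s, r ≠ s → F r * (F s)ᵀ = 0 := by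
    intro r s hrs
    have h1 : (lam r : ℂ) • (F r * (F s)ᵀ) = (lam s : ℂ) • (F r * (F s)ᵀ) := by
      calc (lam r : ℂ) • (F r * (F s)ᵀ) = ((lam r : ℂ) • F r) * (F s)ᵀ := by
            rw [smul_mul_assoc]
        _ = (F r * L) * (F s)ᵀ := by rw [hFL]
        _ = F r * (L * (F s)ᵀ) := by rw [mul_assoc]
        _ = F r * ((lam s : ℂ) • (F s)ᵀ) := by rw [hLFt s]; norm_cast
        _ = (lam s : ℂ) • (F r * (F s)ᵀ) := by rw [mul_smul_comm]
    have h2 : ((lam r : ℂ) - (lam s : ℂ)) • (F r * (F s)ᵀ) = 0 := by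
      rw [sub_smul, h1, sub_self]
    rcases smul_eq_zero.mp h2 with h | h
    · exact absurd (sub_eq_zero.mp h) (hlam hrs)
    · exact h
  have hFt : ∀ r, (F r)ᵀ = F r := by
    intro r
    have h1 : F r = F r * (F r)ᵀ := by
      calc F r = F r * 1 := (mul_one _).symm
        _ = F r * ∑ s, (F s)ᵀ := by
            rw [← Matrix.transpose_one, ← hsum, Matrix.transpose_sum]
        _ = ∑ s, F r * (F s)ᵀ := by rw [Finset.mul_sum]
        _ = F r * (F r)ᵀ := by
            rw [Finset.sum_eq_single r]
            · intro s _ hsr; exact horth' r s (Ne.symm hsr)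
            · intro h; exact absurd (Finset.mem_univ r) h
    have h2 : (F r)ᵀ = F r * (F r)ᵀ := by
      calc (F r)ᵀ = 1 * (F r)ᵀ := (one_mul _).symm
        _ = (∑ s, F s) * (F r)ᵀ := by rw [hsum]
        _ = ∑ s, F s * (F r)ᵀ := by rw [Finset.sum_mul]
        _ = F r * (F r)ᵀ := by
            rw [Finset.sum_eq_single r]
            · intro s _ hsr; exact horth' s r hsr
            · intro h; exact absurd (Finset.mem_univ r) h
    rw [h2, ← h1]
  -- entries of F r are real
  have hFreal : ∀ r i j, (starRingEnd ℂ) (F r i j) = F r i j := by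
    intro r i j
    have h1 : (F r)ᴴ i j = F r i j := by rw [hherm r]
    rw [Matrix.conjTranspose_apply] at h1
    rw [show F r j i = F r i j from congrFun (congrFun (hFt r).symm j) i] at h1
    exact h1
  -- key: F r * exp A = exp (c r) • F r
  have hkey : ∀ r, F r * NormedSpace.exp A = Complex.exp (c r) • F r := by
    intro r
    apply mul_exp_of_mul_eq_smul
    rw [hA, mul_smul_comm, hFL, smul_smul, hc]
    ring_nf
  -- unitarity : conj γ * γ = 1
  have hAH : Aᴴ = -A := by
    rw [hA, Matrix.conjTranspose_smul, hLherm]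
    rw [← neg_smul]
    congr 1
    simp [Complex.ext_iff]
  have hunit : (NormedSpace.exp A)ᴴ * NormedSpace.exp A = 1 := by
    rw [← Matrix.exp_conjTranspose, hAH, ← Matrix.exp_add_of_commute (-A) A ((Commute.refl A).neg_left), neg_add_cancel, NormedSpace.exp_zero]
  have hγγ : (starRingEnd ℂ) γ * γ = 1 := by
    have h1 : star (Pi.single u 1 : V → ℂ) ⬝ᵥ
        (((NormedSpace.exp A)ᴴ * NormedSpace.exp A) *ᵥ (Pi.single u 1 : V → ℂ)) = 1 := by
      rw [hunit, Matrix.one_mulVec]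
      simp [dotProduct, Pi.single_apply, apply_ite]
    rw [← Matrix.mulVec_mulVec, Matrix.dotProduct_mulVec, ← Matrix.star_mulVec] at h1
    rw [hpst] at h1
    simpa [dotProduct, Pi.single_apply, apply_ite, mul_comm, mul_assoc,
      Finset.sum_ite_eq, star_smul] using h1
  have hγ0 : γ ≠ 0 := by
    intro h
    rw [h, mul_zero] at hγγ
    exact zero_ne_one hγγ
  have hγinv : (starRingEnd ℂ) γ = γ⁻¹ :=
    eq_inv_of_mul_eq_one_left hγγ
  -- the basic relation
  have hrel : ∀ r, F r *ᵥ (Pi.single u 1 : V → ℂ)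
      = (Complex.exp (-(c r)) * γ) • (F r *ᵥ (Pi.single v 1 : V → ℂ)) := by
    intro r
    have h1 := congrArg (fun x => F r *ᵥ x) hpst
    simp only [Matrix.mulVec_mulVec, Matrix.mulVec_smul] at h1
    rw [hkey r, Matrix.smul_mulVec] at h1
    have h2 := congrArg (fun x => Complex.exp (-(c r)) • x) h1
    simp only [smul_smul] at h2
    rw [← Complex.exp_add, neg_add_cancel, Complex.exp_zero, one_smul] at h2
    exact h2
  -- conjugate of c r is -(c r)
  have hcconj : ∀ r, (starRingEnd ℂ) (c r) = -(c r) := by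
    intro r
    simp [hc, Complex.ext_iff]
  intro r
  have hmain : F r *ᵥ (Pi.single u 1 : V → ℂ)
      = (γ⁻¹ * Complex.exp (c r)) • (F r *ᵥ (Pi.single v 1 : V → ℂ)) := by
    funext w
    have h1 := congrFun (hrel r) w
    simp only [Matrix.mulVec_single_one, Matrix.col_apply, mul_one] at h1 ⊢
    have h2 := congrArg (starRingEnd ℂ) h1
    simp only [Pi.smul_apply, Matrix.col_apply, smul_eq_mul, _root_.map_mul] at h2
    rw [hFreal r w u, hFreal r w v, ← Complex.exp_conj, map_neg, hcconj, neg_neg,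
      hγinv] at h2
    simp only [Pi.smul_apply, Matrix.col_apply, smul_eq_mul]
    rw [h2]
    ring
  refine ⟨hmain, ?_⟩
  have habs : ‖γ⁻¹ * Complex.exp (c r)‖ = 1 := by
    rw [norm_mul, norm_inv, Complex.norm_exp]
    have h0 : ‖γ‖ ^ 2 = 1 := by
      have := congrArg norm hγγ
      rwa [norm_mul, norm_one, Complex.norm_conj, ← sq] at this
    have h1 : ‖γ‖ = 1 := by nlinarith [norm_nonneg γ]
    have h2 : (c r).re = 0 := by simp [hc]
    rw [h1, h2, Real.exp_zero, inv_one, one_mul]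
  apply Finset.sum_congr rfl
  intro w _
  rw [congrFun hmain w]
  rw [Pi.smul_apply, smul_eq_mul, norm_mul, habs, one_mul]
end
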